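/- Let p be a prime and let m = μ × μ be the product measure on ℚ_p², where μ is the Haar measure on ℚ_p normalized so that μ(ℤ_p) = 1. Let n ≥ 2 be an integer and let D = B(x₁, r₁) × B(x₂, r₂) ⊆ ℤ_p² be a product of closed p-adic balls with m(D) < 1/(6 n³). Then there exists a p-adic affine line L ⊆ ℚ_p² such that R_n ∩ D ⊆ L, where R_n = { (z₁/q, z₂/q) ∈ ℚ_p² : z₁, z₂ ∈ ℤ, q ∈ ℕ, max(|z₁|, |z₂|, q) < n } and |z| denotes the usual (archimedean) absolute value of the integer z. -/

import Mathlib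

set_option maxHeartbeats 1000000

open Metric Set MeasureTheory ENNReal

lemma ballA (p : ℕ) [Fact p.Prime] [MeasurableSpace ℚ_[p]] [BorelSpace ℚ_[p]]
    (μ : Measure ℚ_[p]) [μ.IsAddHaarMeasure]
    (hμ : μ {x : ℚ_[p] | ‖x‖ ≤ 1} = 1) (k : ℕ) :
    ENNReal.ofReal ((p:ℝ)^(-(k:ℤ))) ≤ μ {x : ℚ_[p] | ‖x‖ ≤ (p:ℝ)^(-(k:ℤ))} := by
  set B := {x : ℚ_[p] | ‖x‖ ≤ (p:ℝ)^(-(k:ℤ))} with hB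
  have hcov : {x : ℚ_[p] | ‖x‖ ≤ 1} ⊆
      ⋃ j ∈ Finset.range (p^k), (fun x => (-(j:ℚ_[p])) + x) ⁻¹' B := by
    intro x hx
    set y : ℤ_[p] := ⟨x, hx⟩ with hy
    refine Set.mem_biUnion (Finset.mem_range.mpr (y.appr_lt k)) ?_
    have h1 : ‖y - (y.appr k : ℤ_[p])‖ ≤ (p:ℝ)^(-(k:ℤ)) :=
      ((y - y.appr k).norm_le_pow_iff_mem_span_pow k).mpr (y.appr_spec k)
    have h2 : ((y - (y.appr k : ℤ_[p]) : ℤ_[p]) : ℚ_[p]) = -(y.appr k : ℚ_[p]) + x := by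
      push_cast
      ring
    simp only [Set.mem_preimage, hB, Set.mem_setOf_eq]
    rw [← h2]
    simpa [PadicInt.norm_def] using h1
  have hsum : μ {x : ℚ_[p] | ‖x‖ ≤ 1} ≤ (p^k : ℕ) * μ B := by
    calc μ {x : ℚ_[p] | ‖x‖ ≤ 1} ≤ μ (⋃ j ∈ Finset.range (p^k), (fun x => (-(j:ℚ_[p])) + x) ⁻¹' B) :=
          measure_mono hcov
      _ ≤ ∑ j ∈ Finset.range (p^k), μ ((fun x => (-(j:ℚ_[p])) + x) ⁻¹' B) :=
          measure_biUnion_finset_le _ _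
      _ = ∑ _j ∈ Finset.range (p^k), μ B := by
          refine Finset.sum_congr rfl fun j _ => ?_
          exact measure_preimage_add μ _ B
      _ = (p^k : ℕ) * μ B := by simp [mul_comm]
  rw [hμ] at hsum
  have hpk : ((p^k : ℕ) : ℝ≥0∞) ≠ 0 := by
    simp [pow_ne_zero, (Fact.out : p.Prime).pos.ne']
  have hpk' : ((p^k : ℕ) : ℝ≥0∞) ≠ ⊤ := by simp
  have : ((p^k : ℕ) : ℝ≥0∞)⁻¹ ≤ μ B := by
    calc ((p^k : ℕ) : ℝ≥0∞)⁻¹ = ((p^k : ℕ) : ℝ≥0∞)⁻¹ * 1 := (mul_one _).symm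
      _ ≤ ((p^k : ℕ) : ℝ≥0∞)⁻¹ * (((p^k : ℕ) : ℝ≥0∞) * μ B) := by gcongr
      _ = μ B := by rw [← mul_assoc, ENNReal.inv_mul_cancel hpk hpk', one_mul]
  refine le_trans (le_of_eq ?_) this
  rw [← ENNReal.ofReal_natCast (p^k), ← ENNReal.ofReal_inv_of_pos]
  · congr 1
    push_cast
    rw [zpow_neg, zpow_natCast]
  · exact_mod_cast pow_pos (Fact.out : p.Prime).pos k


lemma natC (p : ℕ) [Fact p.Prime] : ∀ m : ℕ, 0 < m → ((m:ℝ))⁻¹ ≤ ‖(m:ℚ_[p])‖ := by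
  intro m
  induction m using Nat.strong_induction_on with
  | _ m ih =>
    intro hm
    by_cases hdvd : p ∣ m
    · obtain ⟨t, rfl⟩ := hdvd
      have hp1 : 1 < p := (Fact.out : p.Prime).one_lt
      have ht : 0 < t := by
        rcases Nat.eq_zero_or_pos t with rfl | h
        · simp at hm
        · exact h
      have htlt : t < p * t := by nlinarith
      have h := ih t htlt ht
      have hp0 : (0:ℝ) < p := by exact_mod_cast (Fact.out : p.Prime).pos
      have ht0 : (0:ℝ) < t := by exact_mod_cast ht
      push_cast
      rw [norm_mul, Padic.norm_p, mul_inv]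
      gcongr
    · have h2 : ¬ ((p:ℤ) ∣ (m:ℤ)) := by exact_mod_cast hdvd
      have h1 : ¬ ‖((m:ℤ) : ℚ_[p])‖ < 1 := fun h =>
        h2 ((Padic.norm_intCast_lt_one_iff (k := (m:ℤ))).mp h)
      have h3 : ‖((m:ℤ) : ℚ_[p])‖ = 1 :=
        le_antisymm (Padic.norm_int_le_one _) (not_lt.mp h1)
      have h4 : (1:ℝ) ≤ m := by exact_mod_cast hm
      have h5 : ((m:ℝ))⁻¹ ≤ 1 := by
        rw [inv_le_one_iff₀]; right; exact h4
      rw [show ((m:ℕ):ℚ_[p]) = (((m:ℤ)):ℚ_[p]) by push_cast; rfl, h3]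
      exact h5

lemma intC (p : ℕ) [Fact p.Prime] (m : ℤ) (hm : m ≠ 0) :
    ((m.natAbs:ℝ))⁻¹ ≤ ‖(m:ℚ_[p])‖ := by
  have h := natC p m.natAbs (Int.natAbs_pos.mpr hm)
  have key : ((m.natAbs:ℕ):ℚ_[p]) = ((m.natAbs:ℤ):ℚ_[p]) := (Int.cast_natCast _).symm
  have h'' : (m.natAbs:ℤ) = m ∨ (m.natAbs:ℤ) = -m := by omega
  rcases h'' with h'' | h''
  · rwa [key, h''] at h
  · rwa [key, h'', Int.cast_neg, norm_neg] at h


lemma ballB (p : ℕ) [Fact p.Prime] [MeasurableSpace ℚ_[p]] [BorelSpace ℚ_[p]]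
    (μ : Measure ℚ_[p]) [μ.IsAddHaarMeasure]
    (hμ : μ {x : ℚ_[p] | ‖x‖ ≤ 1} = 1) {x u v : ℚ_[p]} {r : ℝ}
    (hu : u ∈ closedBall x r) (hv : v ∈ closedBall x r) (huv : u ≠ v)
    (h1 : ‖u - v‖ ≤ 1) :
    ENNReal.ofReal ‖u - v‖ ≤ μ (closedBall x r) := by
  have hne : u - v ≠ 0 := sub_ne_zero.mpr huv
  have hval : ‖u - v‖ = (p:ℝ) ^ (-(u-v).valuation) := Padic.norm_eq_zpow_neg_valuation hne
  have hp1 : (1:ℝ) < p := by exact_mod_cast (Fact.out : p.Prime).one_lt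
  have hvpos : 0 ≤ (u-v).valuation := by
    by_contra hneg
    push_neg at hneg
    have : (1:ℝ) < (p:ℝ) ^ (-(u-v).valuation) :=
      one_lt_zpow₀ hp1 (by omega)
    rw [← hval] at this
    linarith
  set k : ℕ := ((u-v).valuation).toNat with hk
  have hkz : ((k:ℤ)) = (u-v).valuation := Int.toNat_of_nonneg hvpos
  have hval' : ‖u - v‖ = (p:ℝ) ^ (-(k:ℤ)) := by rw [hval, hkz]
  -- the small ball around u is inside the closed ball
  have hsub : (fun y => (-u) + y) ⁻¹' {z : ℚ_[p] | ‖z‖ ≤ (p:ℝ)^(-(k:ℤ))} ⊆ closedBall x r := by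
    intro y hy
    simp only [Set.mem_preimage, Set.mem_setOf_eq] at hy
    have h2 : ‖y - u‖ ≤ ‖u - v‖ := by
      rw [hval']
      rw [show -u + y = y - u by ring] at hy
      exact hy
    have h3 : ‖u - v‖ ≤ r := by
      have := Padic.nonarchimedean (u - x) (x - v)
      rw [show u - x + (x - v) = u - v by ring] at this
      refine this.trans (max_le ?_ ?_)
      · rw [← dist_eq_norm]; exact mem_closedBall.mp hu
      · rw [← dist_eq_norm, dist_comm]; exact mem_closedBall.mp hv
    rw [mem_closedBall, dist_eq_norm]
    have := Padic.nonarchimedean (y - u) (u - x)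
    rw [show y - u + (u - x) = y - x by ring] at this
    refine this.trans (max_le (h2.trans h3) ?_)
    rw [← dist_eq_norm]; exact mem_closedBall.mp hu
  calc ENNReal.ofReal ‖u - v‖ = ENNReal.ofReal ((p:ℝ)^(-(k:ℤ))) := by rw [hval']
    _ ≤ μ {z : ℚ_[p] | ‖z‖ ≤ (p:ℝ)^(-(k:ℤ))} := ballA p μ hμ k
    _ = μ ((fun y => (-u) + y) ⁻¹' {z : ℚ_[p] | ‖z‖ ≤ (p:ℝ)^(-(k:ℤ))}) :=
        (measure_preimage_add μ _ _).symm
    _ ≤ μ (closedBall x r) := measure_mono hsub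


lemma subnorm (p : ℕ) [Fact p.Prime] {u v : ℚ_[p]} (hu : ‖u‖ ≤ 1) (hv : ‖v‖ ≤ 1) :
    ‖u - v‖ ≤ 1 := by
  have := Padic.nonarchimedean u (-v)
  simp only [norm_neg] at this
  rw [sub_eq_add_neg]
  exact this.trans (max_le hu hv)

lemma collin (p : ℕ) [Fact p.Prime]
    [MeasurableSpace ℚ_[p]] [BorelSpace ℚ_[p]]
    (μ : Measure ℚ_[p]) [μ.IsAddHaarMeasure] [SigmaFinite μ]
    (hμ : μ {x : ℚ_[p] | ‖x‖ ≤ 1} = 1)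
    (n : ℕ) (hn : 2 ≤ n)
    (x₁ x₂ : ℚ_[p]) (r₁ r₂ : ℝ)
    (hD : (closedBall x₁ r₁) ×ˢ (closedBall x₂ r₂) ⊆
      {w : ℚ_[p] × ℚ_[p] | ‖w.1‖ ≤ 1 ∧ ‖w.2‖ ≤ 1})
    (hm : (μ.prod μ) ((closedBall x₁ r₁) ×ˢ (closedBall x₂ r₂)) <
      ENNReal.ofReal (1 / (6 * (n : ℝ) ^ 3)))
    {P Q W : ℚ_[p] × ℚ_[p]}
    (hP : P ∈ (closedBall x₁ r₁) ×ˢ (closedBall x₂ r₂))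
    (hQ : Q ∈ (closedBall x₁ r₁) ×ˢ (closedBall x₂ r₂))
    (hW : W ∈ (closedBall x₁ r₁) ×ˢ (closedBall x₂ r₂))
    (hPR : ∃ (z₁ z₂ : ℤ) (q : ℕ), 0 < q ∧ max (max |z₁| |z₂|) (q : ℤ) < (n : ℤ) ∧
          P = ((z₁ : ℚ_[p]) / (q : ℚ_[p]), (z₂ : ℚ_[p]) / (q : ℚ_[p])))
    (hQR : ∃ (z₁ z₂ : ℤ) (q : ℕ), 0 < q ∧ max (max |z₁| |z₂|) (q : ℤ) < (n : ℤ) ∧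
          Q = ((z₁ : ℚ_[p]) / (q : ℚ_[p]), (z₂ : ℚ_[p]) / (q : ℚ_[p])))
    (hWR : ∃ (z₁ z₂ : ℤ) (q : ℕ), 0 < q ∧ max (max |z₁| |z₂|) (q : ℤ) < (n : ℤ) ∧
          W = ((z₁ : ℚ_[p]) / (q : ℚ_[p]), (z₂ : ℚ_[p]) / (q : ℚ_[p]))) :
    (Q.1 - P.1) * (W.2 - P.2) - (Q.2 - P.2) * (W.1 - P.1) = 0 := by
  by_contra hdet
  obtain ⟨a₁, b₁, q₁, hq₁, hx₁, hP'⟩ := hPR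
  obtain ⟨a₂, b₂, q₂, hq₂, hx₂, hQ'⟩ := hQR
  obtain ⟨a₃, b₃, q₃, hq₃, hx₃, hW'⟩ := hWR
  have hq₁' : ((q₁:ℚ_[p])) ≠ 0 := Nat.cast_ne_zero.mpr hq₁.ne'
  have hq₂' : ((q₂:ℚ_[p])) ≠ 0 := Nat.cast_ne_zero.mpr hq₂.ne'
  have hq₃' : ((q₃:ℚ_[p])) ≠ 0 := Nat.cast_ne_zero.mpr hq₃.ne'
  set d₁ := Q.1 - P.1 with hd₁
  set d₂ := Q.2 - P.2 with hd₂
  set e₁ := W.1 - P.1 with he₁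
  set e₂ := W.2 - P.2 with he₂
  set det := d₁ * e₂ - d₂ * e₁ with hdetdef
  set M : ℤ := (q₁:ℤ)*(a₂*b₃ - a₃*b₂) - a₁*((q₂:ℤ)*b₃ - (q₃:ℤ)*b₂)
      + b₁*((q₂:ℤ)*a₃ - (q₃:ℤ)*a₂) with hM
  have eP1 : P.1 = (a₁:ℚ_[p])/(q₁:ℚ_[p]) := by rw [hP']
  have eP2 : P.2 = (b₁:ℚ_[p])/(q₁:ℚ_[p]) := by rw [hP']
  have eQ1 : Q.1 = (a₂:ℚ_[p])/(q₂:ℚ_[p]) := by rw [hQ']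
  have eQ2 : Q.2 = (b₂:ℚ_[p])/(q₂:ℚ_[p]) := by rw [hQ']
  have eW1 : W.1 = (a₃:ℚ_[p])/(q₃:ℚ_[p]) := by rw [hW']
  have eW2 : W.2 = (b₃:ℚ_[p])/(q₃:ℚ_[p]) := by rw [hW']
  have hMeq : (M:ℚ_[p]) = (q₁:ℚ_[p])*(q₂:ℚ_[p])*(q₃:ℚ_[p]) * det := by
    rw [hM, hdetdef, hd₁, hd₂, he₁, he₂, eP1, eP2, eQ1, eQ2, eW1, eW2]
    push_cast
    field_simp
    ring
  have hM0 : M ≠ 0 := by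
    intro h0
    rw [h0] at hMeq
    simp only [Int.cast_zero] at hMeq
    have h' := hMeq.symm
    rw [mul_eq_zero, mul_eq_zero, mul_eq_zero] at h'
    rcases h' with ((h|h)|h)|h
    · exact hq₁' h
    · exact hq₂' h
    · exact hq₃' h
    · exact hdet h
  -- integer bounds
  have ha₁ : |a₁| ≤ (n:ℤ) - 1 := by
    have := (max_lt_iff.mp (max_lt_iff.mp hx₁).1).1; omega
  have hb₁' : |b₁| ≤ (n:ℤ) - 1 := by
    have := (max_lt_iff.mp (max_lt_iff.mp hx₁).1).2; omega
  have hqa₁ : |(q₁:ℤ)| ≤ (n:ℤ) - 1 := by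
    have := (max_lt_iff.mp hx₁).2
    rw [abs_of_nonneg (by positivity)]; omega
  have ha₂ : |a₂| ≤ (n:ℤ) - 1 := by
    have := (max_lt_iff.mp (max_lt_iff.mp hx₂).1).1; omega
  have hb₂' : |b₂| ≤ (n:ℤ) - 1 := by
    have := (max_lt_iff.mp (max_lt_iff.mp hx₂).1).2; omega
  have hqa₂ : |(q₂:ℤ)| ≤ (n:ℤ) - 1 := by
    have := (max_lt_iff.mp hx₂).2
    rw [abs_of_nonneg (by positivity)]; omega
  have ha₃ : |a₃| ≤ (n:ℤ) - 1 := by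
    have := (max_lt_iff.mp (max_lt_iff.mp hx₃).1).1; omega
  have hb₃' : |b₃| ≤ (n:ℤ) - 1 := by
    have := (max_lt_iff.mp (max_lt_iff.mp hx₃).1).2; omega
  have hqa₃ : |(q₃:ℤ)| ≤ (n:ℤ) - 1 := by
    have := (max_lt_iff.mp hx₃).2
    rw [abs_of_nonneg (by positivity)]; omega
  have hN1 : (1:ℤ) ≤ (n:ℤ) - 1 := by omega
  have key2 : ∀ x y : ℤ, |x| ≤ (n:ℤ)-1 → |y| ≤ (n:ℤ)-1 → |x*y| ≤ ((n:ℤ)-1)^2 := by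
    intro x y hx hy
    rw [abs_mul, sq]
    exact mul_le_mul hx hy (abs_nonneg _) (by omega)
  have pairbd : ∀ x y z w : ℤ, |x| ≤ (n:ℤ)-1 → |y| ≤ (n:ℤ)-1 → |z| ≤ (n:ℤ)-1 →
      |w| ≤ (n:ℤ)-1 → |x*y - z*w| ≤ 2*((n:ℤ)-1)^2 := by
    intro x y z w hx hy hz hw
    refine (abs_sub _ _).trans ?_
    have h1 := key2 x y hx hy
    have h2 := key2 z w hz hw
    linarith
  have bA : |(q₁:ℤ)*(a₂*b₃ - a₃*b₂)| ≤ ((n:ℤ)-1) * (2*((n:ℤ)-1)^2) := by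
    rw [abs_mul]
    exact mul_le_mul hqa₁ (pairbd a₂ b₃ a₃ b₂ ha₂ hb₃' ha₃ hb₂') (abs_nonneg _) (by omega)
  have bB : |a₁*((q₂:ℤ)*b₃ - (q₃:ℤ)*b₂)| ≤ ((n:ℤ)-1) * (2*((n:ℤ)-1)^2) := by
    rw [abs_mul]
    exact mul_le_mul ha₁ (pairbd (q₂:ℤ) b₃ (q₃:ℤ) b₂ hqa₂ hb₃' hqa₃ hb₂') (abs_nonneg _) (by omega)
  have bC : |b₁*((q₂:ℤ)*a₃ - (q₃:ℤ)*a₂)| ≤ ((n:ℤ)-1) * (2*((n:ℤ)-1)^2) := by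
    rw [abs_mul]
    exact mul_le_mul hb₁' (pairbd (q₂:ℤ) a₃ (q₃:ℤ) a₂ hqa₂ ha₃ hqa₃ ha₂) (abs_nonneg _) (by omega)
  have hMabs : |M| < 6*(n:ℤ)^3 := by
    have step1 : |M| ≤ |(q₁:ℤ)*(a₂*b₃ - a₃*b₂) - a₁*((q₂:ℤ)*b₃ - (q₃:ℤ)*b₂)|
        + |b₁*((q₂:ℤ)*a₃ - (q₃:ℤ)*a₂)| := by
      rw [hM]; exact abs_add_le _ _
    have step2 : |(q₁:ℤ)*(a₂*b₃ - a₃*b₂) - a₁*((q₂:ℤ)*b₃ - (q₃:ℤ)*b₂)|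
        ≤ |(q₁:ℤ)*(a₂*b₃ - a₃*b₂)| + |a₁*((q₂:ℤ)*b₃ - (q₃:ℤ)*b₂)| := abs_sub _ _
    have hn' : (2:ℤ) ≤ (n:ℤ) := by exact_mod_cast hn
    have hlt : 6*((n:ℤ)-1)^3 < 6*(n:ℤ)^3 := by nlinarith
    have hring : (((n:ℤ)-1) * (2*((n:ℤ)-1)^2)) * 3 = 6*((n:ℤ)-1)^3 := by ring
    linarith [bA, bB, bC, step1, step2]
  -- real/norm chain
  have hMnat_pos : (0:ℝ) < (M.natAbs:ℝ) := by
    exact_mod_cast Int.natAbs_pos.mpr hM0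
  have hMreal : (M.natAbs:ℝ) < 6*(n:ℝ)^3 := by
    have := hMabs
    rw [Int.abs_eq_natAbs] at this
    exact_mod_cast this
  have h1 : 1/(6*(n:ℝ)^3) < (M.natAbs:ℝ)⁻¹ := by
    have := one_div_lt_one_div_of_lt hMnat_pos hMreal
    rwa [one_div (M.natAbs:ℝ)] at this
  have h2 : 1/(6*(n:ℝ)^3) < ‖(M:ℚ_[p])‖ := h1.trans_le (intC p M hM0)
  have hqprod : ‖((q₁:ℚ_[p])*(q₂:ℚ_[p])*(q₃:ℚ_[p]))‖ ≤ 1 := by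
    have h := Padic.norm_int_le_one (p := p) ((q₁*q₂*q₃ : ℕ) : ℤ)
    have hc : ((((q₁*q₂*q₃ : ℕ)):ℤ):ℚ_[p]) = (q₁:ℚ_[p])*(q₂:ℚ_[p])*(q₃:ℚ_[p]) := by
      push_cast; ring
    rwa [hc] at h
  have h3 : ‖(M:ℚ_[p])‖ ≤ ‖det‖ := by
    calc ‖(M:ℚ_[p])‖ = ‖(q₁:ℚ_[p])*(q₂:ℚ_[p])*(q₃:ℚ_[p])‖ * ‖det‖ := by rw [hMeq, norm_mul]
      _ ≤ 1 * ‖det‖ := mul_le_mul_of_nonneg_right hqprod (norm_nonneg _)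
      _ = ‖det‖ := one_mul _
  set t₁ := max ‖d₁‖ ‖e₁‖ with ht₁
  set t₂ := max ‖d₂‖ ‖e₂‖ with ht₂
  have h4 : ‖det‖ ≤ t₁ * t₂ := by
    calc ‖det‖ = ‖d₁*e₂ + -(d₂*e₁)‖ := by rw [hdetdef, sub_eq_add_neg]
      _ ≤ max ‖d₁*e₂‖ ‖-(d₂*e₁)‖ := Padic.nonarchimedean _ _
      _ = max (‖d₁‖*‖e₂‖) (‖d₂‖*‖e₁‖) := by rw [norm_neg, norm_mul, norm_mul]
      _ ≤ t₁ * t₂ := by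
          refine max_le (mul_le_mul (le_max_left _ _) (le_max_right _ _) (norm_nonneg _)
            ((norm_nonneg _).trans (le_max_left _ _))) ?_
          rw [mul_comm]
          exact mul_le_mul (le_max_right _ _) (le_max_left _ _) (norm_nonneg _)
            ((norm_nonneg _).trans (le_max_left _ _))
  have hdetpos : 0 < ‖det‖ := norm_pos_iff.mpr hdet
  have ht₁pos : 0 < t₁ := by
    rcases lt_or_ge 0 t₁ with h | h
    · exact h
    · exfalso
      have hd0 : d₁ = 0 := norm_eq_zero.mp
        (le_antisymm (le_trans (le_max_left _ _) h) (norm_nonneg _))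
      have he0 : e₁ = 0 := norm_eq_zero.mp
        (le_antisymm (le_trans (le_max_right _ _) h) (norm_nonneg _))
      apply hdet
      rw [hdetdef, hd0, he0]; ring
  have ht₂pos : 0 < t₂ := by
    rcases lt_or_ge 0 t₂ with h | h
    · exact h
    · exfalso
      have hd0 : d₂ = 0 := norm_eq_zero.mp
        (le_antisymm (le_trans (le_max_left _ _) h) (norm_nonneg _))
      have he0 : e₂ = 0 := norm_eq_zero.mp
        (le_antisymm (le_trans (le_max_right _ _) h) (norm_nonneg _))
      apply hdet
      rw [hdetdef, hd0, he0]; ring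
  have hPZ := hD hP
  have hQZ := hD hQ
  have hWZ := hD hW
  have hmB₁ : ENNReal.ofReal t₁ ≤ μ (closedBall x₁ r₁) := by
    rcases max_choice ‖d₁‖ ‖e₁‖ with hc | hc
    · have hne : Q.1 ≠ P.1 := by
        intro h
        have hz : d₁ = 0 := by rw [hd₁, h, sub_self]
        rw [ht₁, hc, hz, norm_zero] at ht₁pos
        exact lt_irrefl 0 ht₁pos
      rw [ht₁, hc, hd₁]
      exact ballB p μ hμ hQ.1 hP.1 hne (subnorm p hQZ.1 hPZ.1)
    · have hne : W.1 ≠ P.1 := by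
        intro h
        have hz : e₁ = 0 := by rw [he₁, h, sub_self]
        rw [ht₁, hc, hz, norm_zero] at ht₁pos
        exact lt_irrefl 0 ht₁pos
      rw [ht₁, hc, he₁]
      exact ballB p μ hμ hW.1 hP.1 hne (subnorm p hWZ.1 hPZ.1)
  have hmB₂ : ENNReal.ofReal t₂ ≤ μ (closedBall x₂ r₂) := by
    rcases max_choice ‖d₂‖ ‖e₂‖ with hc | hc
    · have hne : Q.2 ≠ P.2 := by
        intro h
        have hz : d₂ = 0 := by rw [hd₂, h, sub_self]
        rw [ht₂, hc, hz, norm_zero] at ht₂pos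
        exact lt_irrefl 0 ht₂pos
      rw [ht₂, hc, hd₂]
      exact ballB p μ hμ hQ.2 hP.2 hne (subnorm p hQZ.2 hPZ.2)
    · have hne : W.2 ≠ P.2 := by
        intro h
        have hz : e₂ = 0 := by rw [he₂, h, sub_self]
        rw [ht₂, hc, hz, norm_zero] at ht₂pos
        exact lt_irrefl 0 ht₂pos
      rw [ht₂, hc, he₂]
      exact ballB p μ hμ hW.2 hP.2 hne (subnorm p hWZ.2 hPZ.2)
  have hfin : ENNReal.ofReal (1/(6*(n:ℝ)^3)) ≤
      (μ.prod μ) ((closedBall x₁ r₁) ×ˢ (closedBall x₂ r₂)) := by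
    rw [Measure.prod_prod]
    calc ENNReal.ofReal (1/(6*(n:ℝ)^3)) ≤ ENNReal.ofReal (t₁ * t₂) :=
        ENNReal.ofReal_le_ofReal (h2.le.trans (h3.trans h4))
      _ = ENNReal.ofReal t₁ * ENNReal.ofReal t₂ := ENNReal.ofReal_mul ht₁pos.le
      _ ≤ μ (closedBall x₁ r₁) * μ (closedBall x₂ r₂) := mul_le_mul' hmB₁ hmB₂
  exact absurd hm (not_lt.mpr hfin)


theorem stmt10 (p : ℕ) [Fact p.Prime]
    [MeasurableSpace ℚ_[p]] [BorelSpace ℚ_[p]]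
    (μ : Measure ℚ_[p]) [μ.IsAddHaarMeasure] [SigmaFinite μ]
    (hμ : μ {x : ℚ_[p] | ‖x‖ ≤ 1} = 1)
    (n : ℕ) (hn : 2 ≤ n)
    (x₁ x₂ : ℚ_[p]) (r₁ r₂ : ℝ)
    -- D ⊆ ℤ_p²
    (hD : (closedBall x₁ r₁) ×ˢ (closedBall x₂ r₂) ⊆
      {w : ℚ_[p] × ℚ_[p] | ‖w.1‖ ≤ 1 ∧ ‖w.2‖ ≤ 1})
    -- m(D) < 1/(6n³)
    (hm : (μ.prod μ) ((closedBall x₁ r₁) ×ˢ (closedBall x₂ r₂)) <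
      ENNReal.ofReal (1 / (6 * (n : ℝ) ^ 3))) :
    ∃ a b c : ℚ_[p], (a, b) ≠ ((0 : ℚ_[p]), (0 : ℚ_[p])) ∧
      ∀ w : ℚ_[p] × ℚ_[p],
        w ∈ (closedBall x₁ r₁) ×ˢ (closedBall x₂ r₂) →
        (∃ (z₁ z₂ : ℤ) (q : ℕ), 0 < q ∧ max (max |z₁| |z₂|) (q : ℤ) < (n : ℤ) ∧
          w = ((z₁ : ℚ_[p]) / (q : ℚ_[p]), (z₂ : ℚ_[p]) / (q : ℚ_[p]))) →
        a * w.1 + b * w.2 = c := by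
  by_cases hex : ∃ P Q : ℚ_[p] × ℚ_[p],
      (P ∈ (closedBall x₁ r₁) ×ˢ (closedBall x₂ r₂)) ∧
      (∃ (z₁ z₂ : ℤ) (q : ℕ), 0 < q ∧ max (max |z₁| |z₂|) (q : ℤ) < (n : ℤ) ∧
          P = ((z₁ : ℚ_[p]) / (q : ℚ_[p]), (z₂ : ℚ_[p]) / (q : ℚ_[p]))) ∧
      (Q ∈ (closedBall x₁ r₁) ×ˢ (closedBall x₂ r₂)) ∧
      (∃ (z₁ z₂ : ℤ) (q : ℕ), 0 < q ∧ max (max |z₁| |z₂|) (q : ℤ) < (n : ℤ) ∧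
          Q = ((z₁ : ℚ_[p]) / (q : ℚ_[p]), (z₂ : ℚ_[p]) / (q : ℚ_[p]))) ∧ P ≠ Q
  · obtain ⟨P, Q, hPD, hPR, hQD, hQR, hPQ⟩ := hex
    refine ⟨Q.2 - P.2, P.1 - Q.1, (Q.2 - P.2) * P.1 + (P.1 - Q.1) * P.2, ?_, ?_⟩
    · intro h
      rw [Prod.mk.injEq] at h
      obtain ⟨h1, h2⟩ := h
      exact hPQ (Prod.ext (sub_eq_zero.mp h2) (sub_eq_zero.mp h1).symm)
    · intro w hw hwr
      have hc := collin p μ hμ n hn x₁ x₂ r₁ r₂ hD hm hPD hQD hw hPR hQR hwr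
      linear_combination -hc
  · by_cases h1 : ∃ P : ℚ_[p] × ℚ_[p],
        (P ∈ (closedBall x₁ r₁) ×ˢ (closedBall x₂ r₂)) ∧
        (∃ (z₁ z₂ : ℤ) (q : ℕ), 0 < q ∧ max (max |z₁| |z₂|) (q : ℤ) < (n : ℤ) ∧
          P = ((z₁ : ℚ_[p]) / (q : ℚ_[p]), (z₂ : ℚ_[p]) / (q : ℚ_[p])))
    · obtain ⟨P, hPD, hPR⟩ := h1
      refine ⟨1, 0, P.1, by simp, ?_⟩
      intro w hw hwr
      have hwP : w = P := by
        by_contra hne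
        exact hex ⟨w, P, hw, hwr, hPD, hPR, hne⟩
      rw [hwP]; ring
    · refine ⟨1, 0, 0, by simp, ?_⟩
      intro w hw hwr
      exact absurd ⟨w, hw, hwr⟩ h1
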